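/- Soundness of ideal proxy objects: if x↪ō occurs during an execution, then (i) if ō is allocated at program allocation site o, the edge x↪o is in the least fixed point Π̃* computed with Π_miss = Π̃*_miss, and (ii) if ō is allocated in missing code with ideal proxy p̃ = φ̃(ō) (its dynamic footprint), then x↪p̃ ∈ Π̃*. -/
import Mathlib


/-- Events (statement steps): allocation, assignment, load, store, and library
call (which assigns the returned concrete object `c` to `x`). -/
inductive Ev (V F M O CO : Type) where
  | alloc (x : V) (o : O) (c : CO)
  | assign (x y : V)
  | load (x y : V) (f : F)
  | store (x : V) (f : F) (y : V)
  | call (x : V) (m : M) (y : V) (c : CO)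

/-- A state: environment and heap. -/
structure St (V F CO : Type) where
  env : V → Option CO
  heap : CO → F → Option CO

/-- Small-step semantics of a single statement. Since only program code is
modeled (library effects appear only as call-return events), all heap writes use
program fields: the disjoint fields assumption is built in. -/
def step {V F M O CO : Type} [DecidableEq V] [DecidableEq F] [DecidableEq CO]
    (σ : St V F CO) : Ev V F M O CO → St V F CO
  | .alloc x _ c => ⟨Function.update σ.env x (some c), σ.heap⟩
  | .assign x y => ⟨Function.update σ.env x (σ.env y), σ.heap⟩
  | .load x y f => ⟨Function.update σ.env x (σ.env y >>= fun c => σ.heap c f), σ.heap⟩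
  | .store x f y =>
      ⟨σ.env, fun c g => if σ.env x = some c ∧ g = f then σ.env y else σ.heap c g⟩
  | .call x _ _ c => ⟨Function.update σ.env x (some c), σ.heap⟩

def runs {V F M O CO : Type} [DecidableEq V] [DecidableEq F] [DecidableEq CO]
    (σ0 : St V F CO) (tr : List (Ev V F M O CO)) : St V F CO :=
  tr.foldl step σ0

/-- The state reached after the first `i` steps of the trace. -/
def stateAt {V F M O CO : Type} [DecidableEq V] [DecidableEq F] [DecidableEq CO]
    (σ0 : St V F CO) (tr : List (Ev V F M O CO)) (i : ℕ) : St V F CO :=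
  runs σ0 (tr.take i)

/-- The dynamic footprint of a concrete object `c`: the set of visible variables
that ever point to `c` during the execution. This is the ideal proxy object of a
concrete object allocated in missing code. -/
def footprint {V F M O CO : Type} [DecidableEq V] [DecidableEq F] [DecidableEq CO]
    (σ0 : St V F CO) (tr : List (Ev V F M O CO)) (c : CO) : Set V :=
  {v | ∃ i, (stateAt σ0 tr i).env v = some c}

/-- The points-to relation `Π̃*`: the least relation over abstract objects
`O ⊕ Set V` (program allocation sites and ideal proxy objects) closed under the
static rules and containing all missing edges `Π̃*_miss`, i.e. the edges arising
at library-call assignments during the execution (rules `missProg` and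
`missProxy`). -/
inductive PDerives {V F M O CO : Type} [DecidableEq V] [DecidableEq F] [DecidableEq CO]
    (σ0 : St V F CO) (tr : List (Ev V F M O CO)) : V → O ⊕ Set V → Prop where
  | alloc {x o c} : Ev.alloc x o c ∈ tr → PDerives σ0 tr x (Sum.inl o)
  | assign {x y a} : Ev.assign x y ∈ tr → PDerives σ0 tr y a → PDerives σ0 tr x a
  | loadstore {x y z w : V} {f : F} {a a' : O ⊕ Set V} :
      Ev.load x y f ∈ tr → Ev.store z f w ∈ tr →
      PDerives σ0 tr y a' → PDerives σ0 tr z a' → PDerives σ0 tr w a →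
      PDerives σ0 tr x a
  | missProg {x : V} {m : M} {y x' : V} {o : O} {c : CO} :
      Ev.call x m y c ∈ tr → Ev.alloc x' o c ∈ tr → PDerives σ0 tr x (Sum.inl o)
  | missProxy {x : V} {m : M} {y : V} {c : CO} :
      Ev.call x m y c ∈ tr → (∀ (x' : V) (o : O), Ev.alloc x' o c ∉ tr) →
      PDerives σ0 tr x (Sum.inr (footprint σ0 tr c))

section Aux

variable {V F M O CO : Type} [DecidableEq V] [DecidableEq F] [DecidableEq CO]

/-- The abstract soundness predicate for a variable `v` and concrete object `c`. -/
def Gd (σ0 : St V F CO) (tr : List (Ev V F M O CO)) (v : V) (c : CO) : Prop :=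
    (∀ (x' : V) (o : O), Ev.alloc x' o c ∈ tr → PDerives σ0 tr v (Sum.inl o)) ∧
    ((∀ (x' : V) (o : O), Ev.alloc x' o c ∉ tr) →
      PDerives σ0 tr v (Sum.inr (footprint σ0 tr c)))

lemma Gd_mono {σ0 : St V F CO} {tr : List (Ev V F M O CO)} {v w : V} {c : CO}
    (h : Gd σ0 tr w c)
    (hder : ∀ a, PDerives σ0 tr w a → PDerives σ0 tr v a) : Gd σ0 tr v c :=
  ⟨fun x' o hm => hder _ (h.1 x' o hm), fun hn => hder _ (h.2 hn)⟩

lemma Gd_common {σ0 : St V F CO} {tr : List (Ev V F M O CO)} {y z : V} {c' : CO}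
    (hy : Gd σ0 tr y c') (hz : Gd σ0 tr z c') :
    ∃ a', PDerives σ0 tr y a' ∧ PDerives σ0 tr z a' := by
  by_cases h : ∃ (x' : V) (o : O), Ev.alloc x' o c' ∈ tr
  · obtain ⟨x', o, hm⟩ := h
    exact ⟨Sum.inl o, hy.1 x' o hm, hz.1 x' o hm⟩
  · push_neg at h
    exact ⟨Sum.inr (footprint σ0 tr c'), hy.2 h, hz.2 h⟩

lemma stateAt_succ (σ0 : St V F CO) (tr : List (Ev V F M O CO)) (i : ℕ) :
    stateAt σ0 tr (i + 1) =
      (Option.elim tr[i]? (stateAt σ0 tr i) (step (stateAt σ0 tr i))) := by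
  unfold stateAt runs
  rw [List.take_succ, List.foldl_append]
  cases h : tr[i]? <;> simp

lemma inv_main (σ0 : St V F CO) (hEnv : ∀ v, σ0.env v = none)
    (hHeap : ∀ c f, σ0.heap c f = none) (tr : List (Ev V F M O CO))
    (hUniq : ∀ (i j : ℕ) (x x' : V) (o o' : O) (c : CO),
      tr[i]? = some (Ev.alloc x o c) → tr[j]? = some (Ev.alloc x' o' c) → i = j)
    (i : ℕ) :
    (∀ v c, (stateAt σ0 tr i).env v = some c → Gd σ0 tr v c) ∧
    (∀ c' f c, (stateAt σ0 tr i).heap c' f = some c →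
      ∃ z w, Ev.store z f w ∈ tr ∧ Gd σ0 tr z c' ∧ Gd σ0 tr w c) := by
  induction i with
  | zero =>
    constructor
    · intro v c hv
      simp [stateAt, runs, hEnv] at hv
    · intro c' f c hh
      simp [stateAt, runs, hHeap] at hh
  | succ i ih =>
    rw [stateAt_succ]
    cases h : tr[i]? with
    | none => simpa using ih
    | some e =>
      have hmem : e ∈ tr := List.mem_of_getElem? h
      simp only [Option.elim]
      cases e with
      | alloc x o c0 =>
        refine ⟨fun v c hv => ?_, ih.2⟩
        simp only [step, Function.update_apply] at hv
        by_cases hvx : v = x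
        · simp [hvx] at hv
          subst hv
          refine hvx ▸ ⟨fun x' o' hall => ?_, fun hno => absurd hmem (hno x o)⟩
          obtain ⟨j, hjlt, hj⟩ := List.mem_iff_getElem.mp hall
          have hj' : tr[j]? = some (Ev.alloc x' o' c0) := by
            rw [List.getElem?_eq_getElem hjlt, hj]
          have hij := hUniq i j x x' o o' c0 h hj'
          rw [hij, hj'] at h
          injection h with h
          injection h with h1 h2 h3
          subst h2
          exact PDerives.alloc hmem
        · simp [hvx] at hv
          exact ih.1 v c hv
      | assign x y =>
        refine ⟨fun v c hv => ?_, ih.2⟩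
        simp only [step, Function.update_apply] at hv
        by_cases hvx : v = x
        · simp [hvx] at hv
          exact hvx ▸ Gd_mono (ih.1 y c hv) (fun a => PDerives.assign hmem)
        · simp [hvx] at hv
          exact ih.1 v c hv
      | load x y f =>
        refine ⟨fun v c hv => ?_, ih.2⟩
        simp only [step, Function.update_apply] at hv
        by_cases hvx : v = x
        · subst hvx
          rw [if_pos rfl] at hv
          cases hy : (stateAt σ0 tr i).env y with
          | none => rw [hy] at hv; exact absurd hv (by simp)
          | some c' =>
          rw [hy] at hv
          have hheap : (stateAt σ0 tr i).heap c' f = some c := hv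
          obtain ⟨z, w, hst, hGz, hGw⟩ := ih.2 c' f c hheap
          obtain ⟨a', hya', hza'⟩ := Gd_common (ih.1 y c' hy) hGz
          refine ⟨fun x' o hall => ?_, fun hno => ?_⟩
          · exact PDerives.loadstore hmem hst hya' hza' (hGw.1 x' o hall)
          · exact PDerives.loadstore hmem hst hya' hza' (hGw.2 hno)
        · simp [hvx] at hv
          exact ih.1 v c hv
      | store x f y =>
        refine ⟨ih.1, fun c' g c hh => ?_⟩
        simp only [step] at hh
        by_cases hc : (stateAt σ0 tr i).env x = some c' ∧ g = f
        · rw [if_pos hc] at hh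
          exact ⟨x, y, hc.2 ▸ hmem, ih.1 x c' hc.1, ih.1 y c hh⟩
        · rw [if_neg hc] at hh
          exact ih.2 c' g c hh
      | call x m y c0 =>
        refine ⟨fun v c hv => ?_, ih.2⟩
        simp only [step, Function.update_apply] at hv
        by_cases hvx : v = x
        · simp [hvx] at hv
          subst hv
          exact hvx ▸ ⟨fun x' o hall => PDerives.missProg hmem hall,
            fun hno => PDerives.missProxy hmem hno⟩
        · simp [hvx] at hv
          exact ih.1 v c hv

end Aux

/-- Soundness of ideal proxy objects: if `x ↪ c` occurs during the
execution, then (i) if `c` is allocated at a program allocation site `o`, the edge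
`x ↪ o` is in `Π̃*`, and (ii) if `c` is allocated in missing code (never at a
program allocation), then `x ↪ p̃` is in `Π̃*`, where `p̃` is the ideal proxy
object of `c`, its dynamic footprint. -/
theorem stmt11 {V F M O CO : Type} [DecidableEq V] [DecidableEq F] [DecidableEq CO]
    (σ0 : St V F CO)
    (hEnv : ∀ v, σ0.env v = none) (hHeap : ∀ c f, σ0.heap c f = none)
    (tr : List (Ev V F M O CO))
    (hFresh : ∀ i x o c, tr[i]? = some (.alloc x o c) →
      (∀ v, (stateAt σ0 tr i).env v ≠ some c) ∧
      (∀ c' f, (stateAt σ0 tr i).heap c' f ≠ some c))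
    (hUniq : ∀ (i j : ℕ) (x x' : V) (o o' : O) (c : CO),
      tr[i]? = some (Ev.alloc x o c) → tr[j]? = some (Ev.alloc x' o' c) → i = j)
    (i : ℕ) (x : V) (c : CO)
    (hdyn : (stateAt σ0 tr i).env x = some c) :
    (∀ (x' : V) (o : O), Ev.alloc x' o c ∈ tr → PDerives σ0 tr x (Sum.inl o)) ∧
    ((∀ (x' : V) (o : O), Ev.alloc x' o c ∉ tr) →
      PDerives σ0 tr x (Sum.inr (footprint σ0 tr c))) := by
  exact (inv_main σ0 hEnv hHeap tr hUniq i).1 x c hdyn
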